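/- For every field F, every integer d ≥ 1, every π ∈ {1,2}^d and every a ∈ {0,1}^d, the partial derivative matrix M_{(Y,Z)}(IMM_d|_{ρ_{π,a}}) has rank exactly 2^m over F, where Y = {y_1,…,y_{⌈|A|/2⌉}}, Z = {z_1,…,z_{⌊|A|/2⌋}} are the live variables of ρ_{π,a} and m = |Z| = ⌊|A|/2⌋. -/

import Mathlib

open MvPolynomial

/-- The variable set `X = {x^(i)_{u,v}}`: index `i ∈ Fin d`, entries `u,v ∈ Fin 2`
(value `0` of `Fin 2` represents `1`, value `1` represents `2`). -/
abbrev IMMVar (d : ℕ) : Type := Fin d × Fin 2 × Fin 2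

/-- The matrix `M^(i)` of variables. -/
noncomputable def IMMMat (F : Type) [CommSemiring F] (d : ℕ) (i : Fin d) :
    Matrix (Fin 2) (Fin 2) (MvPolynomial (IMMVar d) F) :=
  Matrix.of fun u v => X (i, u, v)

/-- The iterated matrix multiplication polynomial `IMM_d = M(1,1) + M(1,2)`,
where `M = M^(1) ⋯ M^(d)`. -/
noncomputable def IMMPoly (F : Type) [CommSemiring F] (d : ℕ) :
    MvPolynomial (IMMVar d) F :=
  (List.ofFn (IMMMat F d)).prod 0 0 + (List.ofFn (IMMMat F d)).prod 0 1

/-- `π(i−1)`, with the convention `π(0) = 1` (represented by `0 : Fin 2`). -/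
def prevOf {d : ℕ} (π : Fin d → Fin 2) (i : Fin d) : Fin 2 :=
  if _ : (i : ℕ) = 0 then 0 else π ⟨(i : ℕ) - 1, by have := i.isLt; omega⟩

/-- The number of indices `k ∈ A` (i.e. `a k = true`) with `k < i`; if `i ∈ A` is the
`j`-th smallest element of `A` (1-indexed), then `posIn a i = j − 1`. -/
def posIn {d : ℕ} (a : Fin d → Bool) (i : Fin d) : ℕ :=
  (Finset.univ.filter fun k => a k = true ∧ k < i).card

/-- `|A|` where `A = {i ∈ {1,…,d} : a_i = 1}`. -/
def cardA {d : ℕ} (a : Fin d → Bool) : ℕ :=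
  (Finset.univ.filter fun i => a i = true).card

/-- The restriction `ρ_{π,a}`, sending each variable `x^(i)_{u,v}` to a fresh
variable (`Sum.inl k` represents `y_{k+1}`, `Sum.inr k` represents `z_{k+1}`) or a
constant in `{0,1}`: if `i ∉ A`, the matrix `M^(i)` is set to the identity matrix when
`π(i−1) = π(i)` and to the flip permutation matrix otherwise; if `i` is the `j`-th
smallest element of `A` with `j` odd (i.e. `posIn a i` even), then
`x^(i)_{π(i−1),π(i)} ↦ y_{⌈j/2⌉}`, `x^(i)_{π(i−1),π(i)'} ↦ 1` and the rest to `0`;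
if `j` is even, then `x^(i)_{π(i−1),π(i)} ↦ z_{j/2}`, `x^(i)_{π(i−1)',π(i)} ↦ 1` and
the rest to `0`. The restricted polynomial `f|_ρ` is `MvPolynomial.aeval (rho F π a) f`. -/
noncomputable def rho (F : Type) [CommSemiring F] {d : ℕ} (π : Fin d → Fin 2)
    (a : Fin d → Bool) (x : IMMVar d) : MvPolynomial (ℕ ⊕ ℕ) F :=
  let i := x.1
  let u := x.2.1
  let v := x.2.2
  let p := prevOf π i
  if a i = true then
    if u = p ∧ v = π i then
      X (if posIn a i % 2 = 0 then Sum.inl (posIn a i / 2) else Sum.inr (posIn a i / 2))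
    else if posIn a i % 2 = 0 then
      (if u = p ∧ v ≠ π i then 1 else 0)
    else
      (if u ≠ p ∧ v = π i then 1 else 0)
  else
    if (u = v) ↔ (p = π i) then 1 else 0

/-- The partial derivative matrix `M_{(Y,Z)}(g)`: rows indexed by subsets `S ⊆ Y`,
columns by subsets `T ⊆ Z`, with `(S,T)` entry the coefficient in `g` of the monomial
`∏_{y∈S} y · ∏_{z∈T} z`. (Left summands of `V ⊕ W` are the `Y`-side variables,
right summands the `Z`-side variables.) -/
noncomputable def pdMatrix (F : Type) [CommSemiring F] {V W : Type}
    (Y : Finset V) (Z : Finset W) (g : MvPolynomial (V ⊕ W) F) :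
    Matrix {S // S ∈ Y.powerset} {T // T ∈ Z.powerset} F :=
  fun S T => MvPolynomial.coeff
    ((S.1.sum fun y => Finsupp.single (Sum.inl y) 1) +
     (T.1.sum fun z => Finsupp.single (Sum.inr z) 1)) g


section AuxIMM

open Finset

variable (F : Type) [CommSemiring F]

/-- `G_t = ∏_{s<t} (y_s z_s + 1)`. -/
noncomputable def Gpoly (t : ℕ) : MvPolynomial (ℕ ⊕ ℕ) F :=
  ∏ s ∈ Finset.range t, (X (Sum.inl s) * X (Sum.inr s) + 1)

lemma Gpoly_succ (t : ℕ) :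
    Gpoly F (t + 1) = Gpoly F t * (X (Sum.inl t) * X (Sum.inr t) + 1) := by
  simp [Gpoly, Finset.prod_range_succ]

/-- number of `i < k` with `a i = true`. -/
def cnt {d : ℕ} (a : Fin d → Bool) (k : ℕ) : ℕ :=
  (Finset.univ.filter fun i : Fin d => a i = true ∧ (i : ℕ) < k).card

lemma posIn_eq_cnt {d : ℕ} (a : Fin d → Bool) (i : Fin d) : posIn a i = cnt a i := by
  unfold posIn cnt
  congr 1

lemma cnt_d {d : ℕ} (a : Fin d → Bool) : cnt a d = cardA a := by
  unfold cnt cardA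
  congr 1
  ext i
  simp [i.isLt]

lemma cnt_succ {d : ℕ} (a : Fin d → Bool) (k : ℕ) (hk : k < d) :
    cnt a (k + 1) = cnt a k + (if a ⟨k, hk⟩ = true then 1 else 0) := by
  classical
  unfold cnt
  have h1 : (Finset.univ.filter fun i : Fin d => a i = true ∧ (i : ℕ) < k + 1)
      = (Finset.univ.filter fun i : Fin d => a i = true ∧ (i : ℕ) < k)
        ∪ (Finset.univ.filter fun i : Fin d => a i = true ∧ i = ⟨k, hk⟩) := by
    ext i
    simp only [Finset.mem_union, Finset.mem_filter, Finset.mem_univ, true_and]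
    constructor
    · rintro ⟨ha, hi⟩
      rcases Nat.lt_succ_iff_lt_or_eq.mp hi with h | h
      · exact Or.inl ⟨ha, h⟩
      · exact Or.inr ⟨ha, Fin.ext h⟩
    · rintro (⟨ha, hi⟩ | ⟨ha, rfl⟩)
      · exact ⟨ha, Nat.lt_succ_of_lt hi⟩
      · exact ⟨ha, Nat.lt_succ_self k⟩
  have h2 : (Finset.univ.filter fun i : Fin d => a i = true ∧ i = ⟨k, hk⟩)
      = if a ⟨k, hk⟩ = true then {(⟨k, hk⟩ : Fin d)} else ∅ := by
    split_ifs with h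
    · ext i
      simp only [Finset.mem_filter, Finset.mem_univ, true_and, Finset.mem_singleton]
      constructor
      · rintro ⟨_, rfl⟩; rfl
      · rintro rfl; exact ⟨h, rfl⟩
    · ext i
      simp only [Finset.mem_filter, Finset.mem_univ, true_and, Finset.notMem_empty,
        iff_false, not_and]
      rintro ha rfl; exact h ha
  rw [h1, Finset.card_union_of_disjoint, h2]
  · split_ifs <;> simp
  · rw [Finset.disjoint_right]
    rintro i hi
    simp only [Finset.mem_filter, Finset.mem_univ, true_and] at hi ⊢
    rcases hi with ⟨_, rfl⟩
    rintro ⟨_, h⟩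
    simp at h

/-- `q k` = `π (k-1)` with convention `q 0 = 0`. -/
def qf {d : ℕ} (π : Fin d → Fin 2) (k : ℕ) : Fin 2 :=
  if k = 0 then 0 else if h2 : k - 1 < d then π ⟨k - 1, h2⟩ else 0

lemma prevOf_eq_qf {d : ℕ} (π : Fin d → Fin 2) (i : Fin d) : prevOf π i = qf π i := by
  unfold prevOf qf
  rcases eq_or_ne (i : ℕ) 0 with h | h
  · simp [h]
  · have h2 : (i : ℕ) - 1 < d := by have := i.isLt; omega
    simp [h, h2]

lemma qf_succ {d : ℕ} (π : Fin d → Fin 2) (k : ℕ) (hk : k < d) :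
    qf π (k + 1) = π ⟨k, hk⟩ := by
  unfold qf
  simp [hk]

/-- The matrices after applying the restriction. -/
noncomputable def Nmat {d : ℕ} (π : Fin d → Fin 2) (a : Fin d → Bool) (i : Fin d) :
    Matrix (Fin 2) (Fin 2) (MvPolynomial (ℕ ⊕ ℕ) F) :=
  (IMMMat F d i).map (aeval (rho F π a))

lemma Nmat_apply {d : ℕ} (π : Fin d → Fin 2) (a : Fin d → Bool) (i : Fin d) (u v : Fin 2) :
    Nmat F π a i u v = rho F π a (i, u, v) := by
  simp [Nmat, IMMMat, Matrix.map_apply, aeval_X]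

lemma fin2_cases (x : Fin 2) : x = 0 ∨ x = 1 := by omega

/-- Main induction: the state of the row vector after `k` steps. -/
lemma prod_take_eq {d : ℕ} (π : Fin d → Fin 2) (a : Fin d → Bool) (k : ℕ) : k ≤ d →
    ∀ j : Fin 2,
    (((List.ofFn (Nmat F π a)).take k).prod) 0 j =
    if cnt a k % 2 = 0 then (if j = qf π k then Gpoly F (cnt a k / 2) else 0)
    else Gpoly F (cnt a k / 2) * (if j = qf π k then X (Sum.inl (cnt a k / 2)) else 1) := by
  induction k with
  | zero =>
    intro _ j
    have hc : cnt a 0 = 0 := by simp [cnt]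
    simp [hc, qf, Gpoly, Matrix.one_apply, eq_comm]
  | succ k ih =>
    intro hk j
    have hk' : k < d := hk
    have hlen : k < (List.ofFn (Nmat F π a)).length := by simp [hk']
    rw [List.prod_take_succ _ k hlen]
    have hget : (List.ofFn (Nmat F π a))[k]'hlen = Nmat F π a ⟨k, hk'⟩ := by
      simp
    rw [hget, Matrix.mul_apply, Fin.sum_univ_two]
    rw [ih (le_of_lt hk') 0, ih (le_of_lt hk') 1]
    rw [cnt_succ a k hk', qf_succ π k hk']
    have hrho : ∀ u v : Fin 2, Nmat F π a ⟨k, hk'⟩ u v = rho F π a (⟨k, hk'⟩, u, v) :=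
      Nmat_apply F π a ⟨k, hk'⟩
    by_cases ha : a ⟨k, hk'⟩ = true
    · by_cases hpar : cnt a k % 2 = 0
      · -- y-step
        have hm1 : (cnt a k + 1) % 2 ≠ 0 := by omega
        have hm2 : (cnt a k + 1) / 2 = cnt a k / 2 := by omega
        simp only [ha, if_true, hm2, if_neg hm1, if_pos hpar]
        rcases fin2_cases (qf π k) with hp | hp <;>
          rcases fin2_cases (π ⟨k, hk'⟩) with hq | hq <;>
          rcases fin2_cases j with hj | hj <;>
          simp_all [hrho, rho, prevOf_eq_qf, posIn_eq_cnt]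
      · -- z-step
        have hm1 : (cnt a k + 1) % 2 = 0 := by omega
        have hm2 : (cnt a k + 1) / 2 = cnt a k / 2 + 1 := by omega
        simp only [ha, if_true, hm2, if_pos hm1, if_neg hpar, Gpoly_succ]
        rcases fin2_cases (qf π k) with hp | hp <;>
          rcases fin2_cases (π ⟨k, hk'⟩) with hq | hq <;>
          rcases fin2_cases j with hj | hj <;>
          simp_all [hrho, rho, prevOf_eq_qf, posIn_eq_cnt] <;> ring
    · -- permutation step
      have ha' : a ⟨k, hk'⟩ = false := by simpa using ha
      simp only [ha', if_false, Nat.add_zero]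
      rcases fin2_cases (qf π k) with hp | hp <;>
        rcases fin2_cases (π ⟨k, hk'⟩) with hq | hq <;>
        rcases fin2_cases j with hj | hj <;>
        by_cases hpar : cnt a k % 2 = 0 <;>
        simp_all [hrho, rho, prevOf_eq_qf, posIn_eq_cnt]

/-- The restricted polynomial. -/
lemma aeval_IMM {d : ℕ} (π : Fin d → Fin 2) (a : Fin d → Bool) :
    aeval (rho F π a) (IMMPoly F d) =
    if cardA a % 2 = 0 then Gpoly F (cardA a / 2)
    else Gpoly F (cardA a / 2) * (X (Sum.inl (cardA a / 2)) + 1) := by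
  classical
  have hmap : ∀ u v : Fin 2,
      aeval (rho F π a) ((List.ofFn (IMMMat F d)).prod u v)
        = (List.ofFn (Nmat F π a)).prod u v := by
    intro u v
    have := map_list_prod ((aeval (rho F π a)).mapMatrix :
      Matrix (Fin 2) (Fin 2) (MvPolynomial (IMMVar d) F) →ₐ[F]
        Matrix (Fin 2) (Fin 2) (MvPolynomial (ℕ ⊕ ℕ) F)) (List.ofFn (IMMMat F d))
    have h2 : ((List.ofFn (IMMMat F d)).map (aeval (rho F π a)).mapMatrix)
        = List.ofFn (Nmat F π a) := by
      rw [List.map_ofFn]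
      rfl
    calc aeval (rho F π a) ((List.ofFn (IMMMat F d)).prod u v)
        = ((aeval (rho F π a)).mapMatrix ((List.ofFn (IMMMat F d)).prod)) u v := rfl
      _ = (((List.ofFn (IMMMat F d)).map (aeval (rho F π a)).mapMatrix).prod) u v := by
          rw [this]
      _ = (List.ofFn (Nmat F π a)).prod u v := by rw [h2]
  have htake : (List.ofFn (Nmat F π a)).take d = List.ofFn (Nmat F π a) := by
    apply List.take_of_length_le
    simp
  have h0 := prod_take_eq F π a d le_rfl 0
  have h1 := prod_take_eq F π a d le_rfl 1
  rw [htake, cnt_d] at h0 h1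
  have : aeval (rho F π a) (IMMPoly F d)
      = (List.ofFn (Nmat F π a)).prod 0 0 + (List.ofFn (Nmat F π a)).prod 0 1 := by
    rw [IMMPoly, map_add, hmap, hmap]
  rw [this, h0, h1]
  rcases fin2_cases (qf π d) with hq | hq <;>
    by_cases hpar : cardA a % 2 = 0 <;>
    simp [hq, hpar] <;> ring

/-- The exponent vector of the monomial `∏_{y∈S} y ∏_{z∈T} z`. -/
noncomputable def mymu (S T : Finset ℕ) : (ℕ ⊕ ℕ) →₀ ℕ :=
  (S.sum fun y => Finsupp.single (Sum.inl y) 1) + (T.sum fun z => Finsupp.single (Sum.inr z) 1)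

lemma mymu_inl (S T : Finset ℕ) (k : ℕ) :
    mymu S T (Sum.inl k) = if k ∈ S then 1 else 0 := by
  classical
  simp [mymu, Finsupp.finset_sum_apply, Finsupp.single_apply, Finset.sum_ite_eq]

lemma mymu_inr (S T : Finset ℕ) (k : ℕ) :
    mymu S T (Sum.inr k) = if k ∈ T then 1 else 0 := by
  classical
  simp [mymu, Finsupp.finset_sum_apply, Finsupp.single_apply, Finset.sum_ite_eq]

lemma mymu_eq_iff (S T U V : Finset ℕ) : mymu S T = mymu U V ↔ S = U ∧ T = V := by
  constructor
  · intro h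
    constructor
    · ext k
      have := DFunLike.congr_fun h (Sum.inl k)
      rw [mymu_inl, mymu_inl] at this
      by_cases hk : k ∈ S <;> by_cases hk2 : k ∈ U <;> simp_all
    · ext k
      have := DFunLike.congr_fun h (Sum.inr k)
      rw [mymu_inr, mymu_inr] at this
      by_cases hk : k ∈ T <;> by_cases hk2 : k ∈ V <;> simp_all
  · rintro ⟨rfl, rfl⟩; rfl

lemma prod_monomial_one (s : Finset ℕ) (f : ℕ → ((ℕ ⊕ ℕ) →₀ ℕ)) :
    (∏ i ∈ s, (monomial (f i) (1 : F))) = monomial (∑ i ∈ s, f i) 1 := by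
  classical
  induction s using Finset.cons_induction with
  | empty => simp
  | cons i s hi ih =>
    rw [Finset.prod_cons, Finset.sum_cons, ih, monomial_mul, one_mul]

lemma Gpoly_eq_sum (m : ℕ) :
    Gpoly F m = ∑ U ∈ (Finset.range m).powerset, monomial (mymu U U) 1 := by
  classical
  unfold Gpoly
  rw [Finset.prod_add]
  refine Finset.sum_congr rfl fun U hU => ?_
  rw [Finset.prod_const_one, mul_one]
  have hX : ∀ s : ℕ, (X (Sum.inl s) * X (Sum.inr s) : MvPolynomial (ℕ ⊕ ℕ) F)
      = monomial (Finsupp.single (Sum.inl s) 1 + Finsupp.single (Sum.inr s) 1) 1 := by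
    intro s
    rw [X, X, monomial_mul, one_mul]
  calc (∏ s ∈ U, (X (Sum.inl s) * X (Sum.inr s) : MvPolynomial (ℕ ⊕ ℕ) F))
      = ∏ s ∈ U, monomial (Finsupp.single (Sum.inl s) 1 + Finsupp.single (Sum.inr s) 1) 1 :=
        Finset.prod_congr rfl fun s _ => hX s
    _ = monomial (∑ s ∈ U, (Finsupp.single (Sum.inl s) 1 + Finsupp.single (Sum.inr s) 1)) 1 :=
        prod_monomial_one F U _
    _ = monomial (mymu U U) 1 := by
        rw [mymu, Finset.sum_add_distrib]

lemma coeff_Gpoly (m : ℕ) (S T : Finset ℕ) (hS : S ⊆ Finset.range m) :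
    coeff (mymu S T) (Gpoly F m) = if S = T then 1 else 0 := by
  classical
  rw [Gpoly_eq_sum, coeff_sum]
  have hterm : ∀ U : Finset ℕ, coeff (mymu S T) (monomial (mymu U U) (1 : F))
      = if S = U ∧ T = U then 1 else 0 := by
    intro U
    rw [coeff_monomial]
    congr 1
    rw [eq_iff_iff]
    rw [mymu_eq_iff]
    constructor
    · rintro ⟨h1, h2⟩; exact ⟨h1.symm, h2.symm⟩
    · rintro ⟨h1, h2⟩; exact ⟨h1.symm, h2.symm⟩
  simp only [hterm]
  by_cases hST : S = T
  · subst hST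
    simp only [and_self]
    rw [Finset.sum_ite_eq (Finset.range m).powerset S (fun _ => (1 : F))]
    simp [Finset.mem_powerset.mpr hS]
  · rw [if_neg hST]
    apply Finset.sum_eq_zero
    intro U _
    rw [if_neg]
    rintro ⟨rfl, rfl⟩
    exact hST rfl

end AuxIMM

/-- For every field `F`, every `d ≥ 1`, every `π ∈ {1,2}^d` and every
`a ∈ {0,1}^d`, the partial derivative matrix `M_{(Y,Z)}(IMM_d|_{ρ_{π,a}})` has rank
exactly `2^m`, where `Y = {y_1,…,y_⌈|A|/2⌉}`, `Z = {z_1,…,z_⌊|A|/2⌋}` and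
`m = ⌊|A|/2⌋`. (Here the `Y`-variables are `Sum.inl k` for `k < ⌈|A|/2⌉` and the
`Z`-variables are `Sum.inr k` for `k < ⌊|A|/2⌋`.) -/
theorem stmt_9 (F : Type) [Field F] (d : ℕ) (hd : 1 ≤ d)
    (π : Fin d → Fin 2) (a : Fin d → Bool) :
    (pdMatrix F (Finset.range ((cardA a + 1) / 2)) (Finset.range (cardA a / 2))
        (MvPolynomial.aeval (rho F π a) (IMMPoly F d))).rank = 2 ^ (cardA a / 2) := by
  classical
  set c := cardA a with hc
  set m := c / 2 with hm
  set Z : Finset ℕ := Finset.range m with hZ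
  set Y : Finset ℕ := Finset.range ((c + 1) / 2) with hY
  set g : MvPolynomial (ℕ ⊕ ℕ) F := MvPolynomial.aeval (rho F π a) (IMMPoly F d) with hg
  set A : Matrix {S // S ∈ Y.powerset} {T // T ∈ Z.powerset} F := pdMatrix F Y Z g with hA
  have hZY : Z ⊆ Y := by
    rw [hZ, hY]
    exact Finset.range_subset_range.mpr (by omega)
  -- entries at rows coming from Z-subsets
  have hentry : ∀ T' T : Finset ℕ, T' ⊆ Z → T ⊆ Z →
      MvPolynomial.coeff (mymu T' T) g = if T' = T then 1 else 0 := by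
    intro T' T hT' hT
    have hT'm : T' ⊆ Finset.range m := hT'
    rw [hg, aeval_IMM]
    by_cases hpar : c % 2 = 0
    · rw [if_pos hpar]
      exact coeff_Gpoly F m T' T hT'm
    · rw [if_neg hpar, mul_add, mul_one, MvPolynomial.coeff_add,
        MvPolynomial.coeff_mul_X']
      rw [if_neg, zero_add]
      · exact coeff_Gpoly F m T' T hT'm
      · rw [Finsupp.mem_support_iff]
        simp only [ne_eq, not_not]
        rw [mymu_inl]
        rw [if_neg]
        intro hmem
        have := hT'm hmem
        simp at this
        rw [hm, hc] at this
        exact lt_irrefl _ this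
  have hAentry : ∀ (S : {S // S ∈ Y.powerset}) (T : {T // T ∈ Z.powerset}),
      A S T = MvPolynomial.coeff (mymu S.1 T.1) g := fun S T => rfl
  set lift : {T // T ∈ Z.powerset} → {S // S ∈ Y.powerset} :=
    fun T => ⟨T.1, Finset.mem_powerset.mpr ((Finset.mem_powerset.mp T.2).trans hZY)⟩
    with hlift
  set B : Matrix {T // T ∈ Z.powerset} {S // S ∈ Y.powerset} F :=
    fun T S => if S = lift T then 1 else 0 with hB
  have hBA : B * A = 1 := by
    ext T' T
    rw [Matrix.mul_apply]
    rw [Finset.sum_eq_single (lift T')]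
    · simp only [hB, if_pos rfl, one_mul]
      rw [hAentry]
      have h1 : (lift T').1 = T'.1 := rfl
      rw [h1, hentry T'.1 T.1 (Finset.mem_powerset.mp T'.2) (Finset.mem_powerset.mp T.2)]
      rw [Matrix.one_apply]
      exact if_congr Subtype.ext_iff.symm rfl rfl
    · intro S _ hS
      simp [hB, hS]
    · intro h
      exact absurd (Finset.mem_univ _) h
  have hcard : Fintype.card {T // T ∈ Z.powerset} = 2 ^ m := by
    rw [Fintype.card_coe, Finset.card_powerset, Finset.card_range]
  have hrank1 : (B * A).rank = 2 ^ m := by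
    rw [hBA, Matrix.rank_one, hcard]
  have hub : A.rank ≤ 2 ^ m := by
    have h := A.rank_le_card_width
    rwa [hcard] at h
  have hlb : 2 ^ m ≤ A.rank := by
    rw [← hrank1]
    exact Matrix.rank_mul_le_right B A
  omega
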